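/- The set of maximizers of h over [0,1) is a nonempty closed bounded interval [q̲, q̄] contained in [0,1); moreover h is weakly increasing on [0, q̲] and weakly decreasing on [q̄, 1). -/

import Mathlib

/-- with `ŵ(p) = (m(p) − (1−δ)·u*(p))/δ` and
`h(p) = (m(1) − ŵ(p))/(1 − p)` on `[0,1)`, the set of maximizers of `h` over `[0,1)`
is a nonempty closed bounded interval `[q̲, q̄] ⊆ [0,1)`; moreover `h` is weakly
increasing on `[0, q̲]` and weakly decreasing on `[q̄, 1)`. -/
theorem maximizers_of_h_form_interval
    (m ustar : ℝ → ℝ) (δ : ℝ) (hδ : δ ∈ Set.Ioo (0 : ℝ) 1)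
    (hconv : ConvexOn ℝ (Set.Icc (0 : ℝ) 1) m)
    (hcont : ContinuousOn m (Set.Icc (0 : ℝ) 1))
    (haff : ∀ x y t : ℝ, ustar ((1 - t) * x + t * y) = (1 - t) * ustar x + t * ustar y)
    (hlt : ustar 1 < m 1) :
    ∀ h : ℝ → ℝ,
      (∀ p : ℝ, h p = (m 1 - (m p - (1 - δ) * ustar p) / δ) / (1 - p)) →
      ∃ ql qh : ℝ, 0 ≤ ql ∧ ql ≤ qh ∧ qh < 1 ∧
        {p ∈ Set.Ico (0 : ℝ) 1 | ∀ q ∈ Set.Ico (0 : ℝ) 1, h q ≤ h p} = Set.Icc ql qh ∧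
        MonotoneOn h (Set.Icc 0 ql) ∧
        AntitoneOn h (Set.Ico qh 1) := by
  obtain ⟨hδ0, hδ1⟩ := hδ
  intro h hh
  obtain ⟨N, hN⟩ : ∃ N : ℝ → ℝ, N = fun p => m 1 - (m p - (1 - δ) * ustar p) / δ := ⟨_, rfl⟩
  have hh' : ∀ p, h p = N p / (1 - p) := by
    intro p; simp only [hN]; exact hh p
  have hδne : δ ≠ 0 := ne_of_gt hδ0
  -- ustar is affine, hence continuous
  have huform : ∀ x : ℝ, ustar x = (1 - x) * ustar 0 + x * ustar 1 := by
    intro x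
    have h1 := haff 0 1 x
    have h2 : (1 - x) * 0 + x * 1 = x := by ring
    rw [h2] at h1
    exact h1
  have hustc : Continuous ustar := by
    have : ustar = fun x => (1 - x) * ustar 0 + x * ustar 1 := funext huform
    rw [this]; fun_prop
  have hNc : ContinuousOn N (Set.Icc 0 1) := by
    rw [hN]
    apply ContinuousOn.sub continuousOn_const
    exact (hcont.sub (continuousOn_const.mul hustc.continuousOn)).div_const δ
  have hhc : ContinuousOn (fun p => N p / (1 - p)) (Set.Ico 0 1) := by
    apply ContinuousOn.div (hNc.mono Set.Ico_subset_Icc_self)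
      ((by fun_prop : Continuous fun p : ℝ => 1 - p).continuousOn)
    intro x hx
    exact sub_ne_zero_of_ne hx.2.ne'
  -- key quasiconcavity inequality
  have key : ∀ p q r : ℝ, 0 ≤ p → p ≤ q → q ≤ r → r < 1 →
      min (N p / (1 - p)) (N r / (1 - r)) ≤ N q / (1 - q) := by
    intro p q r hp0 hpq hqr hr1
    obtain ⟨α, hαdef⟩ : ∃ α : ℝ, α = min (N p / (1 - p)) (N r / (1 - r)) := ⟨_, rfl⟩
    rw [← hαdef]
    have h1p : (0:ℝ) < 1 - p := by linarith
    have h1q : (0:ℝ) < 1 - q := by linarith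
    have h1r : (0:ℝ) < 1 - r := by linarith
    have hαp : α * (1 - p) ≤ N p := (le_div_iff₀ h1p).mp (hαdef ▸ min_le_left _ _)
    have hαr : α * (1 - r) ≤ N r := (le_div_iff₀ h1r).mp (hαdef ▸ min_le_right _ _)
    rw [le_div_iff₀ h1q]
    rcases eq_or_lt_of_le (hpq.trans hqr) with heq | hlt'
    · have hqp : q = p := le_antisymm (heq ▸ hqr) hpq
      rw [hqp]; exact hαp
    · obtain ⟨t, ht⟩ : ∃ t : ℝ, t = (q - p) / (r - p) := ⟨_, rfl⟩
      have hrp : 0 < r - p := by linarith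
      have ht0 : 0 ≤ t := ht ▸ div_nonneg (by linarith) hrp.le
      have ht1 : t ≤ 1 := ht ▸ (div_le_one hrp).mpr (by linarith)
      have htm : t * (r - p) = q - p := by rw [ht]; exact div_mul_cancel₀ _ hrp.ne'
      have hq_eq : (1 - t) * p + t * r = q := by linear_combination htm
      have hm := hconv.2 (Set.mem_Icc.mpr ⟨hp0, by linarith⟩)
        (Set.mem_Icc.mpr ⟨by linarith, hr1.le⟩)
        (by linarith : (0:ℝ) ≤ 1 - t) ht0 (by ring)
      rw [smul_eq_mul, smul_eq_mul, smul_eq_mul, smul_eq_mul, hq_eq] at hm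
      have hu := haff p r t
      rw [hq_eq] at hu
      have hNx : ∀ x, δ * N x = δ * m 1 - (m x - (1 - δ) * ustar x) := by
        intro x; simp only [hN]; field_simp
      have habs : m q - (1 - δ) * ustar q ≤
          (1 - t) * (m p - (1 - δ) * ustar p) + t * (m r - (1 - δ) * ustar r) := by
        rw [hu]; nlinarith [hm]
      have hNq : (1 - t) * N p + t * N r ≤ N q := by
        have hmul : δ * ((1 - t) * N p + t * N r) ≤ δ * N q := by
          have e : δ * ((1 - t) * N p + t * N r)
              = (1 - t) * (δ * N p) + t * (δ * N r) := by ring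
          rw [e, hNx p, hNx r, hNx q]
          nlinarith [habs]
        exact (mul_le_mul_iff_of_pos_left hδ0).mp hmul
      have e1 : (1 - t) * (1 - p) + t * (1 - r) = 1 - q := by
        rw [← hq_eq]; ring
      have h2 := mul_le_mul_of_nonneg_left hαp (by linarith : (0:ℝ) ≤ 1 - t)
      have h3 := mul_le_mul_of_nonneg_left hαr ht0
      rw [← e1]
      nlinarith [h2, h3, hNq]
  -- N 1 < 0
  have hN1 : N 1 < 0 := by
    have e : N 1 = (1 - δ) * (ustar 1 - m 1) / δ := by
      simp only [hN]; field_simp; ring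
    rw [e]
    apply div_neg_of_neg_of_pos _ hδ0
    exact mul_neg_of_pos_of_neg (by linarith) (by linarith)
  -- tail bound
  have hcw : ContinuousWithinAt N (Set.Icc 0 1) 1 :=
    hNc 1 (Set.mem_Icc.mpr ⟨zero_le_one, le_refl 1⟩)
  rw [Metric.continuousWithinAt_iff] at hcw
  obtain ⟨ε, hε, hball⟩ := hcw (-(N 1) / 2) (by linarith)
  obtain ⟨c, hc⟩ : ∃ c : ℝ, c = N 1 / 2 := ⟨_, rfl⟩
  have hcneg : c < 0 := by rw [hc]; linarith
  obtain ⟨B, hB⟩ : ∃ B : ℝ, B = min (N 0 / (1 - 0)) 0 - 1 := ⟨_, rfl⟩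
  have hBneg : B < 0 := by
    have := min_le_right (N 0 / (1 - 0)) 0
    rw [hB]; linarith
  have hBle : B ≤ N 0 / (1 - 0) - 1 := by
    have := min_le_left (N 0 / (1 - 0)) 0
    rw [hB]; linarith
  have hBne : B ≠ 0 := ne_of_lt hBneg
  have hcB : 0 < c / B := div_pos_of_neg_of_neg hcneg hBneg
  obtain ⟨r, hr⟩ : ∃ r : ℝ, r = max (max 0 (1 - ε / 2)) (1 - c / B) := ⟨_, rfl⟩
  have hr0 : 0 ≤ r := hr ▸ le_trans (le_max_left 0 _) (le_max_left _ _)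
  have hr1 : r < 1 := hr ▸ max_lt (max_lt one_pos (by linarith)) (by linarith)
  have htail : ∀ p, r ≤ p → p < 1 → N p / (1 - p) ≤ B := by
    intro p hrp hp1
    have h1p : (0:ℝ) < 1 - p := by linarith
    have hp0 : 0 ≤ p := le_trans hr0 hrp
    have hre : 1 - ε / 2 ≤ r := hr ▸ le_trans (le_max_right 0 _) (le_max_left _ _)
    have hrcb : 1 - c / B ≤ r := hr ▸ le_max_right _ _
    have hdist : dist p 1 < ε := by
      rw [Real.dist_eq, abs_lt]
      constructor <;> linarith
    have hNp := hball (Set.mem_Icc.mpr ⟨hp0, hp1.le⟩) hdist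
    rw [Real.dist_eq, abs_lt] at hNp
    have hNp' : N p ≤ c := by rw [hc]; linarith [hNp.2]
    have hstep1 : N p / (1 - p) ≤ c / (1 - p) := (div_le_div_iff_of_pos_right h1p).mpr hNp'
    have hstep2 : c / (1 - p) ≤ B := by
      rw [div_le_iff₀ h1p]
      have h1pb : 1 - p ≤ c / B := by linarith
      have hmm := mul_le_mul_of_nonpos_left h1pb hBneg.le
      have hcan : B * (c / B) = c := by field_simp
      rw [hcan] at hmm
      linarith
    linarith
  -- maximum on the compact set [0, r]
  have hsub : Set.Icc (0:ℝ) r ⊆ Set.Ico (0:ℝ) 1 := fun x hx =>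
    ⟨hx.1, lt_of_le_of_lt hx.2 hr1⟩
  obtain ⟨x0, hx0, hmax⟩ := isCompact_Icc.exists_isMaxOn
    ⟨0, Set.left_mem_Icc.mpr hr0⟩ (hhc.mono hsub)
  obtain ⟨M, hM⟩ : ∃ M : ℝ, M = N x0 / (1 - x0) := ⟨_, rfl⟩
  have hx01 : x0 < 1 := lt_of_le_of_lt hx0.2 hr1
  have h0M : N 0 / (1 - 0) ≤ M := hM ▸ hmax (Set.left_mem_Icc.mpr hr0)
  have hBM : B < M := by linarith
  have hglob : ∀ p ∈ Set.Ico (0:ℝ) 1, N p / (1 - p) ≤ M := by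
    intro p hp
    rcases le_or_gt p r with hle | hgt
    · exact hM ▸ hmax ⟨hp.1, hle⟩
    · linarith [htail p hgt.le hp.2]
  -- the argmax set
  obtain ⟨T, hT⟩ : ∃ T : Set ℝ,
      T = {p | p ∈ Set.Icc (0:ℝ) r ∧ M ≤ N p / (1 - p)} := ⟨_, rfl⟩
  have hTmem : ∀ p, p ∈ T ↔ p ∈ Set.Icc (0:ℝ) r ∧ M ≤ N p / (1 - p) := by
    intro p; rw [hT]; rfl
  have hTeq : {p ∈ Set.Ico (0:ℝ) 1 | ∀ q ∈ Set.Ico (0:ℝ) 1, h q ≤ h p} = T := by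
    ext p
    simp only [Set.mem_setOf_eq, hTmem]
    constructor
    · rintro ⟨hp, hopt⟩
      have hMp : M ≤ N p / (1 - p) := by
        have h1 := hopt x0 ⟨hx0.1, hx01⟩
        rw [hh' x0, hh' p] at h1
        rw [hM]
        exact h1
      refine ⟨⟨hp.1, ?_⟩, hMp⟩
      by_contra hcon
      push_neg at hcon
      have := htail p hcon.le hp.2
      linarith
    · rintro ⟨hpr, hMp⟩
      refine ⟨hsub hpr, fun q hq => ?_⟩
      rw [hh' q, hh' p]
      exact le_trans (hglob q hq) hMp
  have hTclosed : IsClosed T := by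
    have : T = Set.Icc (0:ℝ) r ∩ (fun p => N p / (1 - p)) ⁻¹' Set.Ici M := by
      ext p; simp [hTmem p, Set.mem_preimage, Set.mem_Ici]
    rw [this]
    exact (hhc.mono hsub).preimage_isClosed_of_isClosed isClosed_Icc isClosed_Ici
  have hTne : T.Nonempty := ⟨x0, (hTmem x0).mpr ⟨hx0, le_of_eq hM⟩⟩
  have hTbb : BddBelow T := ⟨0, fun x hx => ((hTmem x).mp hx).1.1⟩
  have hTba : BddAbove T := ⟨r, fun x hx => ((hTmem x).mp hx).1.2⟩
  refine ⟨sInf T, sSup T, ?_, csInf_le_csSup hTne hTbb hTba, ?_, ?_, ?_, ?_⟩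
  · exact ((hTmem _).mp (hTclosed.csInf_mem hTne hTbb)).1.1
  · exact lt_of_le_of_lt ((hTmem _).mp (hTclosed.csSup_mem hTne hTba)).1.2 hr1
  · -- set equality
    rw [hTeq]
    have hql := (hTmem _).mp (hTclosed.csInf_mem hTne hTbb)
    have hqh := (hTmem _).mp (hTclosed.csSup_mem hTne hTba)
    ext x
    constructor
    · intro hx
      exact ⟨csInf_le hTbb hx, le_csSup hTba hx⟩
    · intro hx
      have hql0 : 0 ≤ sInf T := hql.1.1
      have hqh1 : sSup T < 1 := lt_of_le_of_lt hqh.1.2 hr1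
      have hk := key (sInf T) x (sSup T) hql0 hx.1 hx.2 hqh1
      have hMx : M ≤ N x / (1 - x) :=
        le_trans (le_min hql.2 hqh.2) hk
      exact (hTmem x).mpr ⟨⟨le_trans hql0 hx.1, le_trans hx.2 hqh.1.2⟩, hMx⟩
  · -- MonotoneOn
    intro a ha b hb hab
    have hql := (hTmem _).mp (hTclosed.csInf_mem hTne hTbb)
    have hql1 : sInf T < 1 := lt_of_le_of_lt hql.1.2 hr1
    rw [hh' a, hh' b]
    have ha1 : a < 1 := lt_of_le_of_lt ha.2 hql1
    have hk := key a b (sInf T) ha.1 hab hb.2 hql1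
    have haM : N a / (1 - a) ≤ N (sInf T) / (1 - sInf T) :=
      le_trans (hglob a ⟨ha.1, ha1⟩) hql.2
    rw [min_eq_left haM] at hk
    exact hk
  · -- AntitoneOn
    intro a ha b hb hab
    have hqh := (hTmem _).mp (hTclosed.csSup_mem hTne hTba)
    have hqh0 : 0 ≤ sSup T := hqh.1.1
    rw [hh' a, hh' b]
    have hk := key (sSup T) a b hqh0 ha.1 hab hb.2
    have hbM : N b / (1 - b) ≤ N (sSup T) / (1 - sSup T) :=
      le_trans (hglob b ⟨le_trans hqh0 hb.1, hb.2⟩) hqh.2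
    rw [min_eq_right hbM] at hk
    exact hk
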